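/- Let R be a subring of a commutative ring T with a common ideal C containing a T-regular element, with T flat over R. If R is a GCD domain, then T is a GCD domain. -/

import Mathlib

/-- A GCD domain: an integral domain in which the intersection of any two
principal ideals is principal. -/
def IsGCDDomain (R : Type*) [CommRing R] : Prop :=
  IsDomain R ∧ ∀ a b : R, (Ideal.span {a} ⊓ Ideal.span {b} : Ideal R).IsPrincipal

lemma ulift_sum_two {M : Type*} [AddCommMonoid M] (g : ULift.{v} (Fin 2) → M) :
    ∑ i, g i = g ⟨0⟩ + g ⟨1⟩ := by
  rw [← Equiv.sum_comp (Equiv.ulift.symm) g, Fin.sum_univ_two]; rfl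

/-- regular conductor situation with `T` flat over `R`; if `R` is a
GCD domain, then so is `T`. -/
theorem stmt_16 (T : Type*) [CommRing T] (R : Subring T) (C : Ideal T)
    (hCR : (C : Set T) ⊆ (R : Set T))
    (hreg : ∃ c ∈ C, c ∈ nonZeroDivisors T)
    (hflat : Module.Flat ↥R T)
    (hR : IsGCDDomain ↥R) :
    IsGCDDomain T := by
  classical
  haveI := hflat
  obtain ⟨c, hcC, hc⟩ := hreg
  obtain ⟨hRdom, hRgcd⟩ := hR
  haveI := hRdom
  -- membership of `c * t` in `R` for any `t : T`
  have hmem : ∀ t : T, c * t ∈ R := fun t => hCR (C.mul_mem_right t hcC)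
  -- cancellation by `c`
  have hcancel : ∀ x y : T, c * x = c * y → x = y := fun x y h =>
    (mul_cancel_left_mem_nonZeroDivisors hc).mp h
  -- T is nontrivial
  haveI : Nontrivial T := by
    refine ⟨0, 1, fun h => ?_⟩
    exact zero_ne_one (α := ↥R) (by ext; simpa using h)
  -- T has no zero divisors
  haveI : NoZeroDivisors T := by
    constructor
    intro a b hab
    have h1 : (⟨c * a, hmem a⟩ * ⟨c * b, hmem b⟩ : ↥R) = 0 := by
      ext
      push_cast
      rw [show c * a * (c * b) = c * c * (a * b) by ring, hab, mul_zero]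
    rcases mul_eq_zero.mp h1 with h | h
    · left
      have : c * a = c * 0 := by simpa using congrArg (Subtype.val) h
      exact hcancel a 0 this
    · right
      have : c * b = c * 0 := by simpa using congrArg (Subtype.val) h
      exact hcancel b 0 this
  refine ⟨NoZeroDivisors.to_isDomain T, fun a b => ?_⟩
  -- the principal generator of `(ca)R ∩ (cb)R`
  set fa : ↥R := ⟨c * a, hmem a⟩ with hfa
  set fb : ↥R := ⟨c * b, hmem b⟩ with hfb
  obtain ⟨d, hd⟩ := hRgcd fa fb
  have hdmem : d ∈ Ideal.span {fa} ⊓ Ideal.span {fb} := by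
    rw [hd]; exact Ideal.mem_span_singleton_self d
  obtain ⟨w, hw⟩ := Ideal.mem_span_singleton.mp hdmem.1
  obtain ⟨v, hv⟩ := Ideal.mem_span_singleton.mp hdmem.2
  -- the candidate generator `e` with `c * e = d`
  set e : T := a * (w : T) with he
  have hce : c * e = (d : T) := by
    rw [he, hw]; push_cast; ring
  have heb : e = b * (v : T) := by
    apply hcancel
    rw [hce, hv]; push_cast; ring
  refine ⟨⟨e, le_antisymm ?_ ?_⟩⟩
  · -- span a ⊓ span b ≤ span e : uses flatness
    rintro x ⟨hxa, hxb⟩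
    obtain ⟨t, ht⟩ := Ideal.mem_span_singleton.mp hxa
    obtain ⟨s, hs⟩ := Ideal.mem_span_singleton.mp hxb
    -- the relation (c*a) • t + (c*b) • (-s) = 0
    set F : ULift.{0} (Fin 2) → ↥R := fun i => ![fa, fb] i.down with hF
    set X : ULift.{0} (Fin 2) → T := fun i => ![t, -s] i.down with hX
    have h0 : ∀ (r : ↥R) (u : T), r • u = (r : T) * u := fun r u => rfl
    have hrel : ∑ i, F i • X i = 0 := by
      rw [ulift_sum_two]
      simp only [hF, hX, Matrix.cons_val_zero, Matrix.cons_val_one,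
        Matrix.head_cons, h0, hfa, hfb]
      rw [show c * a * t = c * (a * t) by ring, ← ht,
        show c * b * -s = -(c * (b * s)) by ring, ← hs]
      ring
    obtain ⟨κ, A, y, hXy, hAF⟩ := Module.Flat.isTrivialRelation_of_sum_smul_eq_zero hrel
    -- for each j, (c*a) * A 0 j ∈ span d
    have hkey : ∀ j, ∃ u : ↥R, fa * A ⟨0⟩ j = d * u := by
      intro j
      have h1 : fa * A ⟨0⟩ j ∈ Ideal.span {fa} ⊓ Ideal.span {fb} := by
        constructor
        · exact Ideal.mem_span_singleton.mpr ⟨A ⟨0⟩ j, rfl⟩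
        · have h2 := hAF j
          rw [ulift_sum_two] at h2
          simp only [hF, Matrix.cons_val_zero, Matrix.cons_val_one,
            Matrix.head_cons] at h2
          have : fa * A ⟨0⟩ j = fb * (-(A ⟨1⟩ j)) := by linear_combination h2
          rw [this]
          exact Ideal.mem_span_singleton.mpr ⟨-(A ⟨1⟩ j), rfl⟩
      rw [hd] at h1
      obtain ⟨u, hu⟩ := Ideal.mem_span_singleton.mp h1
      exact ⟨u, hu⟩
    choose u hu using hkey
    -- compute : c * x = c * (e * Σ u j • y j)
    apply Ideal.mem_span_singleton.mpr
    refine ⟨∑ j, (u j : T) * y j, hcancel _ _ ?_⟩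
    have hX0 : t = ∑ j, A ⟨0⟩ j • y j := by
      have := hXy ⟨0⟩
      simpa [hX] using this
    calc c * x = c * (a * t) := by rw [ht]
      _ = ∑ j, (c * a) * ((A ⟨0⟩ j : T) * y j) := by
          rw [hX0, Finset.mul_sum, Finset.mul_sum]
          refine Finset.sum_congr rfl fun j _ => ?_
          rw [h0]
          ring
      _ = ∑ j, (d : T) * ((u j : T) * y j) := by
          refine Finset.sum_congr rfl fun j _ => ?_
          have := congrArg (Subtype.val) (hu j)
          push_cast at this
          calc c * a * ((A ⟨0⟩ j : T) * y j) = (c * a * (A ⟨0⟩ j : T)) * y j := by ring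
            _ = ((d : T) * (u j : T)) * y j := by rw [this]
            _ = (d : T) * ((u j : T) * y j) := by ring
      _ = (d : T) * ∑ j, (u j : T) * y j := by rw [Finset.mul_sum]
      _ = c * (e * ∑ j, (u j : T) * y j) := by rw [← hce]; ring
  · -- span e ≤ span a ⊓ span b
    rintro x hx
    obtain ⟨z, hz⟩ := Ideal.mem_span_singleton.mp hx
    constructor
    · exact Ideal.mem_span_singleton.mpr ⟨(w : T) * z, by rw [hz, he]; ring⟩
    · exact Ideal.mem_span_singleton.mpr ⟨(v : T) * z, by rw [hz, heb]; ring⟩
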